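/- Let q be an odd prime power, d ≥ 2, and E ⊆ F_q^d with |E| ≥ q. Then for any real a > 1, there exists Y ⊆ F_q^d with |Y| ≥ ((a-1)/a) q^d such that for every y ∈ Y, the distance set Δ(E ∪ {y}) = {||u - v|| : u, v ∈ E ∪ {y}} satisfies |Δ(E ∪ {y})| ≥ q/(2a). -/

import Mathlib

set_option maxHeartbeats 1000000

open Finset

lemma linear_fiber_card {F : Type*} [Field F] [Fintype F] [DecidableEq F] {d : ℕ}
    (c : Fin d → F) (i0 : Fin d) (hc : c i0 ≠ 0) (b : F) :
    (univ.filter (fun y : Fin d → F => ∑ i, c i * y i = b)).card * Fintype.card F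
      = Fintype.card (Fin d → F) := by
  classical
  set sol : F → (Fin d → F) := fun b' j => if j = i0 then b' / c i0 else 0 with hsol
  have hsolval : ∀ b' : F, ∑ i, c i * sol b' i = b' := by
    intro b'
    rw [Finset.sum_eq_single i0]
    · simp only [hsol, eq_self_iff_true, if_true]
      field_simp
    · intro j _ hj; simp [hsol, hj]
    · simp
  have key : ∀ b' : F,
      (univ.filter (fun y : Fin d → F => ∑ i, c i * y i = b')).card
        = (univ.filter (fun y : Fin d → F => ∑ i, c i * y i = 0)).card := by
    intro b'
    apply Finset.card_bij' (fun y _ => y - sol b') (fun y _ => y + sol b')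
    · intro y hy
      simp only [mem_filter, mem_univ, true_and] at hy ⊢
      simp only [Pi.sub_apply, mul_sub, Finset.sum_sub_distrib, hy, hsolval, sub_self]
    · intro y hy
      simp only [mem_filter, mem_univ, true_and] at hy ⊢
      simp only [Pi.add_apply, mul_add, Finset.sum_add_distrib, hy, hsolval, zero_add]
    · intro y _; simp
    · intro y _; simp
  have total : Fintype.card (Fin d → F)
      = ∑ b' : F, (univ.filter (fun y : Fin d → F => ∑ i, c i * y i = b')).card := by
    rw [← Finset.card_univ]
    exact Finset.card_eq_sum_card_fiberwise (fun x _ => Finset.mem_univ _)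
  rw [total]
  rw [Finset.sum_congr rfl (fun b' _ => key b'), Finset.sum_const, smul_eq_mul, key b,
    ← Finset.card_univ, mul_comm]

theorem distance_set_union_pin (q d : ℕ) (F : Type*) [Field F] [Fintype F] [DecidableEq F]
    (hq : Fintype.card F = q) (hodd : Odd q) (hd : 2 ≤ d)
    (E : Finset (Fin d → F)) (hE : q ≤ E.card) (a : ℝ) (ha : 1 < a) :
    ∃ Y : Finset (Fin d → F), ((Y.card : ℝ) ≥ (a - 1) / a * q ^ d) ∧
      ∀ y ∈ Y,
        ((((insert y E) ×ˢ (insert y E)).image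
          (fun p => ∑ i, (p.1 i - p.2 i) ^ 2)).card : ℝ) ≥ (q : ℝ) / (2 * a) := by
  classical
  have hq0 : 0 < q := hq ▸ Fintype.card_pos
  have htwo : (2 : F) ≠ 0 := by
    intro h2
    obtain ⟨k, hk⟩ := hodd
    have hcast : ((q : ℕ) : F) = 0 := by rw [← hq]; exact FiniteField.cast_card_eq_zero F
    rw [hk] at hcast
    push_cast at hcast
    rw [h2] at hcast
    simp at hcast
  set f : (Fin d → F) → (Fin d → F) → F := fun x y => ∑ i, (x i - y i) ^ 2 with hf
  -- Step A: for x ≠ x', the set of y equidistant from x and x' has size q^(d-1)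
  have stepA : ∀ x x' : Fin d → F, x ≠ x' →
      (univ.filter (fun y => f x y = f x' y)).card = q ^ (d - 1) := by
    intro x x' hxx
    obtain ⟨i0, hi0⟩ : ∃ i, x i ≠ x' i := by
      by_contra h
      push_neg at h
      exact hxx (funext h)
    set c : Fin d → F := fun i => 2 * (x' i - x i) with hc
    set b : F := ∑ i, (x' i ^ 2 - x i ^ 2) with hb
    have hci0 : c i0 ≠ 0 := mul_ne_zero htwo (sub_ne_zero.mpr (Ne.symm hi0))
    have key : ∀ y, f x y - f x' y = (∑ i, c i * y i) - b := by
      intro y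
      simp only [hf, hc, hb, ← Finset.sum_sub_distrib]
      apply Finset.sum_congr rfl
      intro i _
      ring
    have hiff : ∀ y, (f x y = f x' y) ↔ (∑ i, c i * y i = b) := by
      intro y
      rw [← sub_eq_zero, key y, sub_eq_zero]
    have hfe : (univ.filter (fun y => f x y = f x' y))
        = (univ.filter (fun y : Fin d → F => ∑ i, c i * y i = b)) := by
      apply Finset.filter_congr
      intro y _
      exact hiff y
    have hcard := linear_fiber_card c i0 hci0 b
    rw [← hfe, hq, Fintype.card_fun, Fintype.card_fin, hq] at hcard
    have hpow : q ^ (d - 1) * q = q ^ d := by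
      rw [← pow_succ]
      congr 1
      omega
    have := hcard.trans hpow.symm
    exact Nat.eq_of_mul_eq_mul_right hq0 this
  set n := E.card with hn
  set Sy : (Fin d → F) → ℕ :=
    fun y => ((E ×ˢ E).filter (fun p => f p.1 y = f p.2 y)).card with hSy
  -- total count
  have swap : ∑ y : Fin d → F, Sy y
      = ∑ p ∈ E ×ˢ E, (univ.filter (fun y => f p.1 y = f p.2 y)).card := by
    simp only [hSy, Finset.card_filter]
    rw [Finset.sum_comm]
  have total : ∑ y : Fin d → F, Sy y ≤ 2 * n ^ 2 * q ^ (d - 1) := by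
    rw [swap, ← Finset.sum_filter_add_sum_filter_not (E ×ˢ E) (fun p => p.1 = p.2)]
    have hdiag : ∑ p ∈ (E ×ˢ E).filter (fun p => p.1 = p.2),
        (univ.filter (fun y => f p.1 y = f p.2 y)).card ≤ n * q ^ d := by
      have hcard : ((E ×ˢ E).filter (fun p => p.1 = p.2)).card ≤ n := by
        apply Finset.card_le_card_of_injOn (fun p => p.1)
        · intro p hp
          simp only [Finset.mem_coe, mem_filter, mem_product] at hp
          exact hp.1.1
        · rintro ⟨p1, p2⟩ hp ⟨p1', p2'⟩ hp' hpp
          simp only [coe_filter, Set.mem_setOf_eq] at hp hp'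
          simp only at hpp
          rw [← hp.2, ← hp'.2, hpp]
      calc ∑ p ∈ (E ×ˢ E).filter (fun p => p.1 = p.2),
            (univ.filter (fun y => f p.1 y = f p.2 y)).card
          ≤ ∑ _p ∈ (E ×ˢ E).filter (fun p => p.1 = p.2), q ^ d := by
            apply Finset.sum_le_sum
            intro p _
            calc (univ.filter (fun y => f p.1 y = f p.2 y)).card
                ≤ (univ : Finset (Fin d → F)).card := Finset.card_filter_le _ _
              _ = q ^ d := by rw [Finset.card_univ, Fintype.card_fun, Fintype.card_fin, hq]
        _ = ((E ×ˢ E).filter (fun p => p.1 = p.2)).card * q ^ d := by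
            rw [Finset.sum_const, smul_eq_mul]
        _ ≤ n * q ^ d := Nat.mul_le_mul_right _ hcard
    have hoff : ∑ p ∈ (E ×ˢ E).filter (fun p => ¬ p.1 = p.2),
        (univ.filter (fun y => f p.1 y = f p.2 y)).card ≤ n ^ 2 * q ^ (d - 1) := by
      calc ∑ p ∈ (E ×ˢ E).filter (fun p => ¬ p.1 = p.2),
            (univ.filter (fun y => f p.1 y = f p.2 y)).card
          = ∑ _p ∈ (E ×ˢ E).filter (fun p => ¬ p.1 = p.2), q ^ (d - 1) := by
            apply Finset.sum_congr rfl
            intro p hp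
            simp only [mem_filter] at hp
            exact stepA p.1 p.2 hp.2
        _ = ((E ×ˢ E).filter (fun p => ¬ p.1 = p.2)).card * q ^ (d - 1) := by
            rw [Finset.sum_const, smul_eq_mul]
        _ ≤ n ^ 2 * q ^ (d - 1) := by
            apply Nat.mul_le_mul_right
            calc ((E ×ˢ E).filter (fun p => ¬ p.1 = p.2)).card
                ≤ (E ×ˢ E).card := Finset.card_filter_le _ _
              _ = n ^ 2 := by rw [Finset.card_product, ← hn, sq]
    have hq_pow : n * q ^ d ≤ n ^ 2 * q ^ (d - 1) := by
      have : q ^ d = q ^ (d - 1) * q := by rw [← pow_succ]; congr 1; omega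
      rw [this, sq]
      calc n * (q ^ (d - 1) * q) = (n * q) * q ^ (d - 1) := by ring
        _ ≤ (n * n) * q ^ (d - 1) := Nat.mul_le_mul_right _ (Nat.mul_le_mul_left _ hE)
    calc ∑ p ∈ (E ×ˢ E).filter (fun p => p.1 = p.2),
          (univ.filter (fun y => f p.1 y = f p.2 y)).card
        + ∑ p ∈ (E ×ˢ E).filter (fun p => ¬ p.1 = p.2),
          (univ.filter (fun y => f p.1 y = f p.2 y)).card
        ≤ n * q ^ d + n ^ 2 * q ^ (d - 1) := Nat.add_le_add hdiag hoff
      _ ≤ n ^ 2 * q ^ (d - 1) + n ^ 2 * q ^ (d - 1) := Nat.add_le_add_right hq_pow _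
      _ = 2 * n ^ 2 * q ^ (d - 1) := by ring
  -- Markov
  have hn0 : 0 < n := lt_of_lt_of_le hq0 hE
  have hnR : (0 : ℝ) < n := by exact_mod_cast hn0
  have hqR : (0 : ℝ) < q := by exact_mod_cast hq0
  have haR : (0 : ℝ) < a := by linarith
  set th : ℝ := 2 * a * n ^ 2 / q with hth
  have hth0 : 0 < th := by positivity
  refine ⟨univ.filter (fun y : Fin d → F => (Sy y : ℝ) ≤ th), ?_, ?_⟩
  · -- cardinality bound
    set Z := univ.filter (fun y : Fin d → F => ¬ ((Sy y : ℝ) ≤ th)) with hZ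
    have hmark : (Z.card : ℝ) * th ≤ 2 * n ^ 2 * q ^ (d - 1) := by
      have h1 : Z.card • th ≤ ∑ y ∈ Z, (Sy y : ℝ) := by
        apply Finset.card_nsmul_le_sum
        intro y hy
        simp only [hZ, mem_filter] at hy
        linarith [not_le.mp hy.2]
      have h2 : ∑ y ∈ Z, (Sy y : ℝ) ≤ ∑ y : Fin d → F, (Sy y : ℝ) := by
        apply Finset.sum_le_sum_of_subset_of_nonneg (Finset.filter_subset _ _)
        intro y _ _
        positivity
      have h3 : ∑ y : Fin d → F, (Sy y : ℝ) ≤ 2 * n ^ 2 * q ^ (d - 1) := by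
        have := total
        push_cast
        exact_mod_cast this
      rw [nsmul_eq_mul] at h1
      linarith
    have hd1 : ((q : ℝ) ^ (d - 1)) * q = (q : ℝ) ^ d := by
      rw [← pow_succ]
      congr 1
      omega
    have hn2 : (0 : ℝ) < (n : ℝ) ^ 2 := by positivity
    have hZa : (Z.card : ℝ) * a ≤ (q : ℝ) ^ d := by
      rw [hth] at hmark
      have hmul := mul_le_mul_of_nonneg_right hmark hqR.le
      have e1 : ((Z.card : ℝ) * (2 * a * (n:ℝ) ^ 2 / q)) * q
          = (Z.card : ℝ) * a * (2 * (n:ℝ) ^ 2) := by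
        field_simp
      have e2 : 2 * (n:ℝ) ^ 2 * (q:ℝ) ^ (d - 1) * q = (q : ℝ) ^ d * (2 * (n:ℝ) ^ 2) := by
        rw [mul_assoc, hd1]
        ring
      rw [e1, e2] at hmul
      exact le_of_mul_le_mul_right hmul (by positivity)
    have hcards : ((univ.filter (fun y : Fin d → F => (Sy y : ℝ) ≤ th)).card : ℝ)
        = (q : ℝ) ^ d - Z.card := by
      have := Finset.card_filter_add_card_filter_not
        (s := (univ : Finset (Fin d → F))) (fun y => (Sy y : ℝ) ≤ th)
      rw [Finset.card_univ, Fintype.card_fun, Fintype.card_fin, hq] at this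
      have : ((univ.filter (fun y : Fin d → F => (Sy y : ℝ) ≤ th)).card : ℝ) + Z.card
          = (q : ℝ) ^ d := by exact_mod_cast this
      linarith
    rw [ge_iff_le, hcards, div_mul_eq_mul_div, div_le_iff₀ haR]
    nlinarith [hZa]
  · -- pinned distance bound
    intro y hy
    simp only [mem_filter, mem_univ, true_and] at hy
    set Δ : Finset F := E.image (fun x => f x y) with hΔ
    set ν : F → ℕ := fun t => (E.filter (fun x => f x y = t)).card with hν
    have hsum1 : n = ∑ t ∈ Δ, ν t :=
      Finset.card_eq_sum_card_fiberwise (fun x hx => Finset.mem_image_of_mem _ hx)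
    have hsum2 : Sy y = ∑ t ∈ Δ, ν t ^ 2 := by
      have h1 : Sy y = ∑ t ∈ Δ,
          (((E ×ˢ E).filter (fun p => f p.1 y = f p.2 y)).filter
            (fun p => f p.1 y = t)).card := by
        apply Finset.card_eq_sum_card_fiberwise
        intro p hp
        simp only [Finset.mem_coe, mem_filter, mem_product] at hp
        exact Finset.mem_image_of_mem _ hp.1.1
      rw [h1]
      apply Finset.sum_congr rfl
      intro t _
      have heq : ((E ×ˢ E).filter (fun p => f p.1 y = f p.2 y)).filter
            (fun p => f p.1 y = t)
          = (E.filter (fun x => f x y = t)) ×ˢ (E.filter (fun x => f x y = t)) := by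
        ext p
        simp only [mem_filter, mem_product]
        constructor
        · rintro ⟨⟨⟨h1, h2⟩, h3⟩, h4⟩
          exact ⟨⟨h1, h4⟩, ⟨h2, by rw [← h3, h4]⟩⟩
        · rintro ⟨⟨h1, h2⟩, ⟨h3, h4⟩⟩
          exact ⟨⟨⟨h1, h3⟩, by rw [h2, h4]⟩, h2⟩
      simp only [hν]
      rw [heq, Finset.card_product, pow_two]
    -- Cauchy-Schwarz
    have hcs : ((n : ℝ)) ^ 2 ≤ Δ.card * (Sy y : ℝ) := by
      have := Finset.sum_mul_sq_le_sq_mul_sq Δ (fun _ => (1 : ℝ)) (fun t => (ν t : ℝ))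
      simp only [one_mul, one_pow] at this
      have e1 : (∑ t ∈ Δ, (ν t : ℝ)) = (n : ℝ) := by
        rw [hsum1]; push_cast; ring
      have e2 : (∑ t ∈ Δ, ((ν t : ℝ)) ^ 2) = (Sy y : ℝ) := by
        rw [hsum2]; push_cast; ring
      rw [e1, e2] at this
      calc ((n : ℝ)) ^ 2 ≤ (∑ _t ∈ Δ, (1:ℝ)) * (Sy y : ℝ) := this
        _ = Δ.card * (Sy y : ℝ) := by rw [Finset.sum_const, nsmul_eq_mul, mul_one]
    have hΔbound : (q : ℝ) / (2 * a) ≤ (Δ.card : ℝ) := by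
      have h2a : (0 : ℝ) < 2 * a := by linarith
      have h1 : ((n : ℝ)) ^ 2 ≤ Δ.card * th :=
        le_trans hcs (mul_le_mul_of_nonneg_left hy (Nat.cast_nonneg _))
      rw [hth] at h1
      have hn2 : (0 : ℝ) < (n : ℝ) ^ 2 := by positivity
      have hmul := mul_le_mul_of_nonneg_right h1 hqR.le
      have e1 : ((Δ.card : ℝ) * (2 * a * (n:ℝ) ^ 2 / q)) * q
          = (Δ.card : ℝ) * (2 * a) * (n:ℝ) ^ 2 := by
        field_simp
      rw [e1] at hmul
      rw [div_le_iff₀ h2a]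
      have := le_of_mul_le_mul_right (by nlinarith : (q : ℝ) * (n:ℝ)^2 ≤ ((Δ.card : ℝ) * (2 * a)) * (n:ℝ)^2) hn2
      linarith
    have hsub : Δ ⊆ ((insert y E) ×ˢ (insert y E)).image
        (fun p => ∑ i, (p.1 i - p.2 i) ^ 2) := by
      intro t ht
      rw [hΔ, Finset.mem_image] at ht
      obtain ⟨x, hx, hxt⟩ := ht
      rw [Finset.mem_image]
      exact ⟨(x, y), Finset.mem_product.mpr
        ⟨Finset.mem_insert_of_mem hx, Finset.mem_insert_self _ _⟩, hxt⟩
    calc ((q : ℝ)) / (2 * a) ≤ (Δ.card : ℝ) := hΔbound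
      _ ≤ _ := by exact_mod_cast Finset.card_le_card hsub
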